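/- There exist N ∈ ℕ and a constant C > 0 such that for all n ≥ N, the number γ(n) of C∞-words of length n over {r,s} satisfies γ(n) ≥ C · n^β, where β = ln(r+s)/ln((r²+s²)/(r+s)). -/

import Mathlib

namespace Kola

/-- Run-length encoding of a finite word as (letter, count) pairs. -/
def rle : List ℕ → List (ℕ × ℕ)
  | [] => []
  | a :: l =>
    match rle l with
    | [] => [(a, 1)]
    | (b, n) :: t => if a = b then (b, n + 1) :: t else (a, 1) :: (b, n) :: t

/-- Boundary adjustment for the first run: discard if length ≤ r, extend to s if length in (r,s]. -/
def fixRun (r s : ℕ) : List (ℕ × ℕ) → List (ℕ × ℕ)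
  | [] => []
  | (a, n) :: t => if n ≤ r then t else if n ≤ s then (a, s) :: t else (a, n) :: t

/-- The Kolakoski derivative over the alphabet {r,s}. -/
def D (r s : ℕ) (w : List ℕ) : List ℕ :=
  match rle w with
  | [] => []
  | [(_, n)] => if n < s then [] else [n]
  | ps => ((fixRun r s ((fixRun r s ps).reverse)).reverse).map Prod.snd

/-- A C∞-word over {r,s}: all iterated derivatives are words over {r,s}. -/
def IsCInf (r s : ℕ) (w : List ℕ) : Prop :=
  ∀ k : ℕ, ∀ a ∈ (D r s)^[k] w, a = r ∨ a = s

/-- `t` enumerates the starting indices of the (maximal) runs of the sequence `z`. -/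
def IsRunPartition (z : ℕ → ℕ) (t : ℕ → ℕ) : Prop :=
  t 0 = 0 ∧ StrictMono t ∧
  (∀ k i, t k ≤ i → i < t (k + 1) → z i = z (t k)) ∧
  (∀ k, z (t (k + 1)) ≠ z (t k))

/-- `w` is the run-length sequence of `z`. -/
def IsRunLengthSeq (z w : ℕ → ℕ) : Prop :=
  ∃ t, IsRunPartition z t ∧ ∀ k, w k = t (k + 1) - t k

/-- A Kolakoski sequence over {r,s}: a sequence over {r,s} equal to its own run-length sequence. -/
def IsKolakoski (r s : ℕ) (z : ℕ → ℕ) : Prop :=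
  (∀ n, z n = r ∨ z n = s) ∧ IsRunLengthSeq z z

def EventuallyPeriodic (z : ℕ → ℕ) : Prop :=
  ∃ m q : ℕ, 1 ≤ q ∧ ∀ i, m ≤ i → z (i + q) = z i

/-- `w` occurs as a factor of the infinite sequence `z`. -/
def FactorOf (w : List ℕ) (z : ℕ → ℕ) : Prop :=
  ∃ i, w = (List.range w.length).map fun k => z (i + k)

/-- Letter-exchange on words over {r,s}. -/
def exch (r s : ℕ) (w : List ℕ) : List ℕ := w.map fun a => if a = r then s else r

/-- Number of occurrences of `w` as a factor of the prefix of length `n` of `z`. -/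
def countOcc (z : ℕ → ℕ) (w : List ℕ) (n : ℕ) : ℕ :=
  ((Finset.range n).filter fun i => i + w.length ≤ n ∧ ∀ k < w.length, z (i + k) = w.getD k 0).card

/-- All words of length n over {r,s}. -/
def allWords (r s : ℕ) : ℕ → Finset (List ℕ)
  | 0 => {[]}
  | n + 1 => (allWords r s n).image (List.cons r) ∪ (allWords r s n).image (List.cons s)



/-! ### Auxiliary development -/

section Dev

/-- The "other" letter. -/
def oth (r s a : ℕ) : ℕ := if a = r then s else r

/-- Decode a run list into a word. -/
def dec : List (ℕ × ℕ) → List ℕ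
  | [] => []
  | p :: t => List.replicate p.2 p.1 ++ dec t

/-- Valid run lists: positive counts, adjacent letters distinct. -/
def Valid (ps : List (ℕ × ℕ)) : Prop :=
  (∀ p ∈ ps, 1 ≤ p.2) ∧ ps.IsChain (fun p q => p.1 ≠ q.1)

/-- The boundary-run fix operation on a single pair. -/
def FR (r s : ℕ) (p : ℕ × ℕ) : List (ℕ × ℕ) :=
  if p.2 ≤ r then [] else if p.2 ≤ s then [(p.1, s)] else [p]

/-- Pair a list of counts with alternating letters starting from `c`. -/
def rl (r s : ℕ) : ℕ → List ℕ → List (ℕ × ℕ)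
  | _, [] => []
  | c, k :: K => (c, k) :: rl r s (oth r s c) K

lemma dec_append (ps qs : List (ℕ × ℕ)) : dec (ps ++ qs) = dec ps ++ dec qs := by
  induction ps with
  | nil => rfl
  | cons p t ih => simp [dec, ih]

lemma dec_length (ps : List (ℕ × ℕ)) : (dec ps).length = (ps.map Prod.snd).sum := by
  induction ps with
  | nil => rfl
  | cons p t ih => simp [dec, ih]

lemma dec_sum (ps : List (ℕ × ℕ)) : (dec ps).sum = (ps.map (fun p => p.2 * p.1)).sum := by
  induction ps with
  | nil => rfl
  | cons p t ih => simp [dec, ih, List.sum_replicate, smul_eq_mul]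

lemma mem_dec {b : ℕ} {ps : List (ℕ × ℕ)} (h : b ∈ dec ps) : ∃ p ∈ ps, p.1 = b := by
  induction ps with
  | nil => simp [dec] at h
  | cons p t ih =>
    simp only [dec, List.mem_append] at h
    rcases h with h | h
    · exact ⟨p, by simp, (List.eq_of_mem_replicate h).symm⟩
    · obtain ⟨q, hq, hq'⟩ := ih h
      exact ⟨q, by simp [hq], hq'⟩

lemma fst_mem_dec {ps : List (ℕ × ℕ)} (hv : ∀ p ∈ ps, 1 ≤ p.2) {p : ℕ × ℕ} (hp : p ∈ ps) :
    p.1 ∈ dec ps := by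
  induction ps with
  | nil => simp at hp
  | cons q t ih =>
    simp only [dec, List.mem_append]
    rcases List.mem_cons.1 hp with h | h
    · subst h
      exact Or.inl (List.mem_replicate.2 ⟨by have := hv p (by simp); omega, rfl⟩)
    · exact Or.inr (ih (fun x hx => hv x (by simp [hx])) h)

lemma rle_cons (a : ℕ) (l : List ℕ) :
    rle (a :: l) = match rle l with
      | [] => [(a, 1)]
      | (b, n) :: t => if a = b then (b, n + 1) :: t else (a, 1) :: (b, n) :: t := rfl

lemma dec_rle (l : List ℕ) : dec (rle l) = l := by
  induction l with
  | nil => rfl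
  | cons a l ih =>
    rw [rle_cons]
    rcases h : rle l with _ | ⟨⟨b, n⟩, t⟩
    · have hl : l = [] := by
        cases l with
        | nil => rfl
        | cons b l' => rw [h] at ih; simp [dec] at ih
      subst hl
      simp [dec]
    · rw [h] at ih
      by_cases hab : a = b
      · subst hab
        simp only [if_pos rfl, if_true]
        simp only [dec, List.replicate_succ, List.cons_append, List.append_assoc] at ih ⊢
        rw [← ih]
      · simp only [if_neg hab]
        simp [dec] at ih ⊢
        exact ih

lemma valid_rle (l : List ℕ) : Valid (rle l) := by
  induction l with
  | nil =>
    refine ⟨?_, ?_⟩ <;> simp [show rle ([] : List ℕ) = [] from rfl]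
  | cons a l ih =>
    obtain ⟨h1, h2⟩ := ih
    rw [rle_cons]
    rcases h : rle l with _ | ⟨⟨b, n⟩, t⟩
    · exact ⟨by simp, by simp⟩
    · rw [h] at h1 h2
      dsimp only
      by_cases hab : a = b
      · subst hab
        rw [if_pos rfl]
        constructor
        · intro p hp
          rcases List.mem_cons.1 hp with h' | h'
          · subst h'; omega
          · exact h1 p (by simp [h'])
        · rw [List.isChain_cons] at h2 ⊢
          exact ⟨h2.1, h2.2⟩
      · rw [if_neg hab]
        constructor
        · intro p hp
          rcases List.mem_cons.1 hp with h' | h'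
          · subst h'; omega
          · exact h1 p h'
        · rw [List.isChain_cons]
          refine ⟨?_, h2⟩
          intro y hy
          simp only [List.head?_cons, Option.mem_def, Option.some.injEq] at hy
          subst hy
          simpa using hab

lemma rle_nil_iff {l : List ℕ} : rle l = [] ↔ l = [] := by
  constructor
  · intro h
    have := dec_rle l
    rw [h] at this
    exact this.symm
  · rintro rfl; rfl

lemma rle_replicate_append {a n : ℕ} (hn : 1 ≤ n) (x : List ℕ)
    (h : ∀ p ∈ (rle x).head?, (p : ℕ × ℕ).1 ≠ a) :
    rle (List.replicate n a ++ x) = (a, n) :: rle x := by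
  induction n with
  | zero => omega
  | succ n ih =>
    rcases Nat.eq_zero_or_pos n with rfl | hn'
    · rcases hx : rle x with _ | ⟨⟨b, m⟩, t⟩
      · rw [List.replicate_one, List.singleton_append, rle_cons, hx]
      · have hba : ¬ a = b := by
          have := h (b, m) (by rw [hx]; rfl); simp at this; exact fun h' => this h'.symm
        rw [List.replicate_one, List.singleton_append, rle_cons, hx]
        simp [hba]
    · have := ih hn'
      rw [List.replicate_succ, List.cons_append, rle_cons, this]
      simp

lemma rle_dec {ps : List (ℕ × ℕ)} (h : Valid ps) : rle (dec ps) = ps := by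
  induction ps with
  | nil => rfl
  | cons p t ih =>
    obtain ⟨h1, h2⟩ := h
    rw [List.isChain_cons] at h2
    have ht : Valid t := ⟨fun q hq => h1 q (by simp [hq]), h2.2⟩
    have iht := ih ht
    show rle (List.replicate p.2 p.1 ++ dec t) = p :: t
    rw [rle_replicate_append (h1 p (by simp)) (dec t)
      (by
        intro q hq
        rw [iht] at hq
        rcases t with _ | ⟨q0, t⟩
        · simp at hq
        · simp at hq
          subst hq
          exact Ne.symm (h2.1 q0 rfl)), iht]

/-! ### Computing the derivative from run lists -/

lemma fixRun_cons (r s : ℕ) (p : ℕ × ℕ) (t : List (ℕ × ℕ)) :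
    fixRun r s (p :: t) = FR r s p ++ t := by
  obtain ⟨a, n⟩ := p
  show fixRun r s ((a, n) :: t) = FR r s (a, n) ++ t
  unfold fixRun FR
  dsimp only
  split_ifs <;> simp

lemma FR_reverse (r s : ℕ) (p : ℕ × ℕ) : (FR r s p).reverse = FR r s p := by
  unfold FR; split_ifs <;> simp

lemma FR_length_le (r s : ℕ) (p : ℕ × ℕ) : (FR r s p).length ≤ 1 := by
  unfold FR; split_ifs <;> simp

lemma D_nil (r s : ℕ) : D r s [] = [] := rfl

lemma D_singleton {r s : ℕ} {w : List ℕ} {a n : ℕ} (h : rle w = [(a, n)]) :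
    D r s w = if n < s then [] else [n] := by
  unfold D
  rw [h]

lemma D_explicit {r s : ℕ} {w : List ℕ} {p₀ p₁ : ℕ × ℕ} {l : List (ℕ × ℕ)}
    (h : rle w = p₀ :: (l ++ [p₁])) :
    D r s w = ((FR r s p₀ ++ l) ++ FR r s p₁).map Prod.snd := by
  have step : D r s w
      = ((fixRun r s ((fixRun r s (rle w)).reverse)).reverse).map Prod.snd := by
    unfold D
    rw [h]
    rcases l with _ | ⟨q, l⟩ <;> rfl
  rw [step, h, fixRun_cons]
  have h2 : (FR r s p₀ ++ (l ++ [p₁])).reverse = p₁ :: (l.reverse ++ (FR r s p₀).reverse) := by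
    simp
  rw [h2, fixRun_cons]
  simp [FR_reverse]

/-! ### Basic C∞ facts -/

lemma isCInf_iff {r s : ℕ} {w : List ℕ} :
    IsCInf r s w ↔ ((∀ a ∈ w, a = r ∨ a = s) ∧ IsCInf r s (D r s w)) := by
  constructor
  · intro h
    refine ⟨by simpa using h 0, fun k => ?_⟩
    have := h (k + 1)
    rwa [Function.iterate_succ_apply] at this
  · rintro ⟨h0, h⟩ k
    cases k with
    | zero => simp; omega
    | succ k => rw [Function.iterate_succ_apply]; exact h k

lemma isCInf_nil (r s : ℕ) : IsCInf r s [] := by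
  intro k
  have : (D r s)^[k] [] = [] := Function.iterate_fixed (D_nil r s) k
  simp [this]

lemma IsCInf.letters {r s : ℕ} {w : List ℕ} (h : IsCInf r s w) : ∀ a ∈ w, a = r ∨ a = s := by
  simpa using h 0

lemma IsCInf.derv {r s : ℕ} {w : List ℕ} (h : IsCInf r s w) : IsCInf r s (Kola.D r s w) :=
  (isCInf_iff.1 h).2

lemma IsCInf.derv_letters {r s : ℕ} {w : List ℕ} (h : IsCInf r s w) :
    ∀ a ∈ Kola.D r s w, a = r ∨ a = s := h.derv.letters

lemma rle_fst {r s : ℕ} {w : List ℕ} (hw : ∀ a ∈ w, a = r ∨ a = s) :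
    ∀ p ∈ rle w, (p : ℕ × ℕ).1 = r ∨ p.1 = s := by
  intro p hp
  apply hw
  rw [← dec_rle w]
  exact fst_mem_dec (valid_rle w).1 hp

/-- Interior runs of a C∞ word have length r or s; boundary runs have length ≤ s. -/
lemma runs_structure {r s : ℕ} {w : List ℕ} {p₀ p₁ : ℕ × ℕ} {l : List (ℕ × ℕ)}
    (hrs : r ≤ s) (hw : IsCInf r s w) (h : rle w = p₀ :: (l ++ [p₁])) :
    (∀ p ∈ l, (p : ℕ × ℕ).2 = r ∨ p.2 = s) ∧ p₀.2 ≤ s ∧ p₁.2 ≤ s := by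
  have hD := hw.derv_letters
  rw [D_explicit h] at hD
  refine ⟨?_, ?_, ?_⟩
  · intro p hp
    exact hD p.2 (List.mem_map_of_mem (f := Prod.snd) (by simp [hp]))
  · by_contra hc
    push_neg at hc
    have hFR : FR r s p₀ = [p₀] := by
      unfold FR; rw [if_neg (by omega), if_neg (by omega)]
    have : p₀.2 = r ∨ p₀.2 = s := hD p₀.2 (by simp [hFR])
    omega
  · by_contra hc
    push_neg at hc
    have hFR : FR r s p₁ = [p₁] := by
      unfold FR; rw [if_neg (by omega), if_neg (by omega)]
    have : p₁.2 = r ∨ p₁.2 = s := hD p₁.2 (by simp [hFR])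
    omega

lemma runs_single {r s : ℕ} {w : List ℕ} {a n : ℕ}
    (hw : IsCInf r s w) (hrs : r ≤ s) (h : rle w = [(a, n)]) : n ≤ s := by
  by_contra hc
  have hD := hw.derv_letters
  rw [D_singleton h, if_neg (by omega)] at hD
  have := hD n (by simp)
  omega

/-- Every list of length ≥ 2 decomposes as head :: middle ++ [last]. -/
lemma two_decomp {α : Type*} {ps : List α} (h : 2 ≤ ps.length) :
    ∃ p₀ l p₁, ps = p₀ :: (l ++ [p₁]) := by
  rcases ps with _ | ⟨p₀, t⟩
  · simp at h
  rcases List.eq_nil_or_concat t with rfl | ⟨l, p₁, rfl⟩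
  · simp at h
  · exact ⟨p₀, l, p₁, by simp⟩

lemma length_le_sum_counts {ps : List (ℕ × ℕ)} (h : ∀ p ∈ ps, 1 ≤ p.2) :
    ps.length ≤ (ps.map Prod.snd).sum := by
  induction ps with
  | nil => simp
  | cons p t ih =>
    simp only [List.map_cons, List.sum_cons, List.length_cons]
    have := h p (by simp)
    have := ih (fun q hq => h q (by simp [hq]))
    omega

lemma D_length_lt {r s : ℕ} {w : List ℕ} (hr : 0 < r) (hrs : r < s) (hw : w ≠ []) :
    (D r s w).length < w.length := by
  have hlen : w.length = ((rle w).map Prod.snd).sum := by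
    conv_lhs => rw [← dec_rle w]
    exact dec_length _
  rcases Nat.lt_or_ge (rle w).length 2 with h2 | h2
  · rcases hx : rle w with _ | ⟨⟨a, n⟩, t⟩
    · exact absurd (rle_nil_iff.1 hx) hw
    · rcases t with _ | ⟨q, t⟩
      · have hn : 1 ≤ n := (valid_rle w).1 (a, n) (by rw [hx]; simp)
        rw [hlen, hx]
        rw [D_singleton hx]
        split_ifs with h
        · simp; omega
        · simp; omega
      · rw [hx] at h2; simp at h2 <;> omega
  · obtain ⟨p₀, l, p₁, hx⟩ := two_decomp h2
    rw [D_explicit hx, hlen, hx]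
    have hv := (valid_rle w).1
    rw [hx] at hv
    have h0 : 1 ≤ p₀.2 := hv p₀ (by simp)
    have h1 : 1 ≤ p₁.2 := hv p₁ (by simp)
    have hl : l.length ≤ (l.map Prod.snd).sum :=
      length_le_sum_counts (fun q hq => hv q (by simp [hq]))
    have hF0 : (FR r s p₀).length < p₀.2 := by
      unfold FR; split_ifs with e1 e2
      · simp; omega
      · simp; omega
      · simp; omega
    have hF1 : (FR r s p₁).length < p₁.2 := by
      unfold FR; split_ifs with e1 e2
      · simp; omega
      · simp; omega
      · simp; omega
    simp only [List.length_map, List.length_append, List.map_append, List.sum_append,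
      List.map_cons, List.sum_cons, List.map_nil, List.sum_nil]
    omega

/-! ### Weight bound for C∞ words -/

lemma alt_weight {r s : ℕ} (hrs : r < s) :
    ∀ (N : ℕ) (ps : List (ℕ × ℕ)), ps.length ≤ N →
    (∀ p ∈ ps, r ≤ (p : ℕ × ℕ).2 ∧ p.2 ≤ s) → (∀ p ∈ ps, (p : ℕ × ℕ).1 = r ∨ p.1 = s) →
    ps.IsChain (fun p q => p.1 ≠ q.1) →
    (r + s) * (ps.map (fun p => p.2 * p.1)).sum ≤
      (r ^ 2 + s ^ 2) * (ps.map Prod.snd).sum + r * s * s := by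
  intro N
  induction N with
  | zero =>
    intro ps hle _ _ _
    have : ps = [] := List.length_eq_zero_iff.1 (by omega)
    subst this; simp
  | succ N IH =>
    intro ps hle hcnt hfst hch
    rcases ps with _ | ⟨p, t⟩
    · simp
    rcases t with _ | ⟨q, t⟩
    · -- single pair
      simp only [List.map_cons, List.map_nil, List.sum_cons, List.sum_nil, Nat.add_zero]
      have h1 := (hcnt p (by simp)).1
      have h2 := (hcnt p (by simp)).2
      rcases hfst p (by simp) with h | h <;> rw [h]
      · nlinarith [Nat.mul_le_mul_right p.2 (Nat.mul_le_mul_left s hrs.le)]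
      · nlinarith [Nat.mul_le_mul_left (r * s) h2]
    · -- two pairs and recurse
      have hpq : p.1 ≠ q.1 := (List.isChain_cons_cons.1 hch).1
      have hcht : t.IsChain (fun p q => p.1 ≠ q.1) := ((List.isChain_cons_cons.1 hch).2).tail
      have iht := IH t (by simp at hle; omega)
        (fun x hx => hcnt x (by simp [hx])) (fun x hx => hfst x (by simp [hx])) hcht
      simp only [List.map_cons, List.sum_cons]
      have hp1 := (hcnt p (by simp)).1
      have hp2 := (hcnt p (by simp)).2
      have hq1 := (hcnt q (by simp)).1
      have hq2 := (hcnt q (by simp)).2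
      have key : (r + s) * (p.2 * p.1 + q.2 * q.1) ≤ (r ^ 2 + s ^ 2) * (p.2 + q.2) := by
        rcases hfst p (by simp) with h | h <;> rcases hfst q (by simp) with h' | h'
        · rw [h] at hpq; rw [h'] at hpq; omega
        · rw [h, h']
          have k : r * q.2 ≤ s * p.2 := by
            calc r * q.2 ≤ r * s := Nat.mul_le_mul_left r hq2
              _ = s * r := mul_comm _ _
              _ ≤ s * p.2 := Nat.mul_le_mul_left s hp1
          nlinarith
        · rw [h, h']
          have k : r * p.2 ≤ s * q.2 := by
            calc r * p.2 ≤ r * s := Nat.mul_le_mul_left r hp2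
              _ = s * r := mul_comm _ _
              _ ≤ s * q.2 := Nat.mul_le_mul_left s hq1
          nlinarith
        · rw [h] at hpq; rw [h'] at hpq; omega
      nlinarith [iht, key]

lemma weight_bound {r s : ℕ} (hr : 0 < r) (hrs : r < s) {w : List ℕ} (hw : IsCInf r s w) :
    (r + s) * w.sum ≤ (r ^ 2 + s ^ 2) * w.length + 3 * (r + s) * s * s := by
  have hsum : w.sum = ((rle w).map (fun p => p.2 * p.1)).sum := by
    conv_lhs => rw [← dec_rle w]; exact (dec_sum _)
  have hlen : w.length = ((rle w).map Prod.snd).sum := by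
    conv_lhs => rw [← dec_rle w]; exact (dec_length _)
  have hfst := rle_fst hw.letters
  have hval := valid_rle w
  rcases Nat.lt_or_ge (rle w).length 2 with h2 | h2
  · rcases hx : rle w with _ | ⟨⟨a, n⟩, t⟩
    · rw [hsum, hx]; simp
    rcases t with _ | ⟨q, t⟩
    · have hn : n ≤ s := runs_single hw hrs.le hx
      have ha : a ≤ s := by rcases hfst (a, n) (by rw [hx]; simp) with h | h <;> omega
      rw [hsum, hlen, hx]
      simp only [List.map_cons, List.map_nil, List.sum_cons, List.sum_nil, Nat.add_zero]
      have : n * a ≤ s * s := Nat.mul_le_mul hn ha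
      nlinarith
    · rw [hx] at h2; simp at h2 <;> omega
  · obtain ⟨p₀, l, p₁, hx⟩ := two_decomp h2
    obtain ⟨hmid, hb0, hb1⟩ := runs_structure hrs.le hw hx
    have hchl : l.IsChain (fun p q => (p : ℕ × ℕ).1 ≠ q.1) := by
      have h3 := hval.2
      rw [hx] at h3
      have h4 : (l ++ [p₁]).IsChain (fun p q => (p : ℕ × ℕ).1 ≠ q.1) := (List.isChain_cons.1 h3).2
      exact (List.isChain_append.1 h4).1
    have haw := alt_weight hrs l.length l (le_refl _)
      (fun p hp => by rcases hmid p hp with h | h <;> omega)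
      (fun p hp => hfst p (by rw [hx]; simp [hp])) hchl
    have ha0 : p₀.1 ≤ s := by
      rcases hfst p₀ (by rw [hx]; simp) with h | h <;> omega
    have ha1 : p₁.1 ≤ s := by
      rcases hfst p₁ (by rw [hx]; simp) with h | h <;> omega
    have hW0 : p₀.2 * p₀.1 ≤ s * s := Nat.mul_le_mul hb0 ha0
    have hW1 : p₁.2 * p₁.1 ≤ s * s := Nat.mul_le_mul hb1 ha1
    rw [hsum, hlen, hx]
    simp only [List.map_cons, List.map_append, List.sum_cons, List.sum_append,
      List.map_nil, List.sum_nil]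
    nlinarith [haw, hW0, hW1]

/-! ### Snoc lemmas for rle, and the extension lemma -/

lemma FR_low {r s a k : ℕ} (h : k ≤ r) : FR r s (a, k) = [] := by
  unfold FR; dsimp only; rw [if_pos h]

lemma FR_mid {r s a k : ℕ} (h1 : r < k) (h2 : k ≤ s) : FR r s (a, k) = [(a, s)] := by
  unfold FR; dsimp only; rw [if_neg (by omega), if_pos h2]

lemma oth_or {r s a : ℕ} : oth r s a = r ∨ oth r s a = s := by
  unfold oth; split_ifs <;> simp

lemma oth_ne {r s a : ℕ} (hrs : r ≠ s) (ha : a = r ∨ a = s) : oth r s a ≠ a := by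
  rcases ha with h | h <;> subst h <;> unfold oth
  · rw [if_pos rfl]; exact Ne.symm hrs
  · rw [if_neg (Ne.symm hrs)]; exact hrs

lemma oth_oth {r s a : ℕ} (hrs : r ≠ s) (ha : a = r ∨ a = s) : oth r s (oth r s a) = a := by
  rcases ha with h | h <;> subst h <;> unfold oth
  · rw [if_pos rfl, if_neg (Ne.symm hrs)]
  · rw [if_neg (Ne.symm hrs), if_pos rfl]

lemma valid_snoc_same {xs : List (ℕ × ℕ)} {a k : ℕ} (h : Valid (xs ++ [(a, k)])) :
    Valid (xs ++ [(a, k + 1)]) := by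
  constructor
  · intro p hp
    rcases List.mem_append.1 hp with h' | h'
    · exact h.1 p (by simp [h'])
    · simp at h'; subst h'; omega
  · have h2 := h.2
    rw [List.isChain_append] at h2 ⊢
    refine ⟨h2.1, by simp, ?_⟩
    intro x hx y hy
    simp only [List.head?_cons, Option.mem_def, Option.some.injEq] at hy
    subst hy
    have := h2.2.2 x hx (a, k) (by simp)
    simpa using this

lemma rle_snoc_same {w : List ℕ} {xs : List (ℕ × ℕ)} {a k : ℕ} (h : rle w = xs ++ [(a, k)]) :
    rle (w ++ [a]) = xs ++ [(a, k + 1)] := by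
  have hval := valid_rle w
  rw [h] at hval
  have hw : w = dec (xs ++ [(a, k)]) := by rw [← h, dec_rle]
  have hdec : w ++ [a] = dec (xs ++ [(a, k + 1)]) := by
    rw [hw, dec_append, dec_append]
    simp [dec, List.replicate_succ']
  rw [hdec, rle_dec (valid_snoc_same hval)]

lemma rle_snoc_ne {w : List ℕ} {xs : List (ℕ × ℕ)} {a k y : ℕ}
    (h : rle w = xs ++ [(a, k)]) (hy : y ≠ a) :
    rle (w ++ [y]) = xs ++ [(a, k), (y, 1)] := by
  have hval := valid_rle w
  rw [h] at hval
  have hw : w = dec (xs ++ [(a, k)]) := by rw [← h, dec_rle]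
  have hdec : w ++ [y] = dec (xs ++ [(a, k), (y, 1)]) := by
    rw [hw]
    have : xs ++ [(a, k), (y, 1)] = (xs ++ [(a, k)]) ++ [(y, 1)] := by simp
    rw [this, dec_append]
    simp [dec, dec_append]
  rw [hdec, rle_dec]
  constructor
  · intro p hp
    rcases List.mem_append.1 hp with h' | h'
    · exact hval.1 p (by simp [h'])
    · simp at h'
      rcases h' with h' | h' <;> subst h' <;> simp
      exact hval.1 (a, k) (by simp)
  · have : xs ++ [(a, k), (y, 1)] = (xs ++ [(a, k)]) ++ [(y, 1)] := by simp
    rw [this, List.isChain_append]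
    refine ⟨hval.2, by simp, ?_⟩
    intro x hx z hz
    simp only [List.head?_cons, Option.mem_def, Option.some.injEq] at hz
    subst hz
    rw [List.getLast?_concat] at hx
    simp at hx
    subst hx
    simpa using Ne.symm hy

lemma isCInf_snoc_of {r s : ℕ} {w : List ℕ} {y : ℕ} (hw : ∀ a ∈ w, a = r ∨ a = s)
    (hy : y = r ∨ y = s) (hD : IsCInf r s (D r s (w ++ [y]))) : IsCInf r s (w ++ [y]) := by
  rw [isCInf_iff]
  refine ⟨?_, hD⟩
  intro a ha
  rcases List.mem_append.1 ha with h | h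
  · exact hw a h
  · simp at h; subst h; exact hy

lemma isCInf_single_s {r s : ℕ} (hs : 1 < s) : IsCInf r s [s] := by
  rw [isCInf_iff]
  refine ⟨by simp, ?_⟩
  have h : D r s [s] = [] := by
    rw [D_singleton (show rle [s] = [(s, 1)] from rfl), if_pos (by omega)]
  rw [h]; exact isCInf_nil r s

lemma ext_letter {r s : ℕ} (hr : 0 < r) (hrs : r < s) :
    ∀ (n : ℕ) (w : List ℕ), w.length ≤ n → IsCInf r s w →
      ∃ y, (y = r ∨ y = s) ∧ IsCInf r s (w ++ [y]) := by
  have hs1 : 1 < s := by omega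
  have single_r : IsCInf r s [r] := by
    rw [isCInf_iff]
    refine ⟨by simp, ?_⟩
    have : D r s [r] = [] := by
      rw [D_singleton (show rle [r] = [(r, 1)] from rfl), if_pos (by omega)]
    rw [this]; exact isCInf_nil r s
  intro n
  induction n with
  | zero =>
    intro w hlen _
    have : w = [] := List.length_eq_zero_iff.1 (by omega)
    subst this
    exact ⟨r, Or.inl rfl, by simpa using single_r⟩
  | succ n IH =>
    intro w hlen hw
    rcases eq_or_ne w [] with rfl | hne
    · exact ⟨r, Or.inl rfl, by simpa using single_r⟩
    have hval := valid_rle w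
    rcases Nat.lt_or_ge (rle w).length 2 with h2 | h2
    · -- single run
      rcases hx : rle w with _ | ⟨⟨a, kk⟩, t⟩
      · exact absurd (rle_nil_iff.1 hx) hne
      rcases t with _ | ⟨q, t⟩
      swap
      · rw [hx] at h2; simp at h2 <;> omega
      have hk1 : 1 ≤ kk := hval.1 (a, kk) (by rw [hx]; simp)
      have hks : kk ≤ s := runs_single hw hrs.le hx
      have ha : a = r ∨ a = s := rle_fst hw.letters (a, kk) (by rw [hx]; simp)
      rcases Nat.lt_or_ge kk s with hlt | hge
      · refine ⟨a, ha, ?_⟩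
        have hre : rle (w ++ [a]) = [(a, kk + 1)] := by
          have := rle_snoc_same (show rle w = [] ++ [(a, kk)] by simpa using hx)
          simpa using this
        refine isCInf_snoc_of hw.letters ha ?_
        rw [D_singleton hre]
        split_ifs with hcond
        · exact isCInf_nil r s
        · have hks' : kk + 1 = s := by omega
          rw [hks']
          exact isCInf_single_s (by omega)
      · have hk : kk = s := le_antisymm hks hge
        have hba : oth r s a ≠ a := oth_ne (by omega) ha
        have hbr : oth r s a = r ∨ oth r s a = s := oth_or
        refine ⟨oth r s a, hbr, ?_⟩
        refine isCInf_snoc_of hw.letters hbr ?_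
        have hre : rle (w ++ [oth r s a]) = (a, kk) :: ([] ++ [(oth r s a, 1)]) := by
          have := rle_snoc_ne (show rle w = [] ++ [(a, kk)] by simpa using hx) hba
          simpa using this
        rw [D_explicit hre, FR_mid (show r < kk by omega) (show kk ≤ s by omega),
          FR_low (show 1 ≤ r by omega)]
        simpa [hk] using isCInf_single_s (show 1 < s by omega)
    · -- at least two runs
      obtain ⟨p₀, l, p₁, hx⟩ := two_decomp h2
      obtain ⟨a, kk⟩ := p₁
      have hk1 : 1 ≤ kk := hval.1 (a, kk) (by rw [hx]; simp)
      obtain ⟨hmid, hb0, hb1⟩ := runs_structure hrs.le hw hx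
      have hks : kk ≤ s := by simpa using hb1
      have ha : a = r ∨ a = s := rle_fst hw.letters (a, kk) (by rw [hx]; simp)
      have hxx : rle w = (p₀ :: l) ++ [(a, kk)] := by simpa using hx
      rcases Nat.lt_or_ge kk r with hlt | hge1
      · -- kk < r: extend with a; derivative unchanged
        refine ⟨a, ha, isCInf_snoc_of hw.letters ha ?_⟩
        have hre : rle (w ++ [a]) = p₀ :: (l ++ [(a, kk + 1)]) := by
          have := rle_snoc_same hxx
          simpa using this
        have : D r s (w ++ [a]) = D r s w := by
          rw [D_explicit hre, D_explicit hx, FR_low (show kk + 1 ≤ r by omega),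
            FR_low (show kk ≤ r by omega)]
        rw [this]; exact hw.derv
      rcases Nat.lt_or_ge kk s with hlts | hges
      rcases Nat.eq_or_lt_of_le hge1 with heq | hgt
      · -- kk = r : use the IH on D w
        have hDlen : (D r s w).length ≤ n := by
          have := D_length_lt hr hrs hne (r := r) (s := s)
          omega
        obtain ⟨y', hy', hy'C⟩ := IH (D r s w) hDlen hw.derv
        have hDw : D r s w = (FR r s p₀ ++ l).map Prod.snd := by
          rw [D_explicit hx, FR_low (show kk ≤ r by omega)]
          simp
        rcases hy' with hy' | hy'
        · -- extend w with the other letter, D gains an r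
          have hba : oth r s a ≠ a := oth_ne (by omega) ha
          have hbr : oth r s a = r ∨ oth r s a = s := oth_or
          refine ⟨oth r s a, hbr, isCInf_snoc_of hw.letters hbr ?_⟩
          have hre : rle (w ++ [oth r s a]) = p₀ :: ((l ++ [(a, kk)]) ++ [(oth r s a, 1)]) := by
            have := rle_snoc_ne hxx hba
            simpa using this
          have : D r s (w ++ [oth r s a]) = D r s w ++ [y'] := by
            rw [D_explicit hre, FR_low (show 1 ≤ r by omega), hDw]
            simp [hy', ← heq]
          rw [this]; exact hy'C
        · -- extend w with a, D gains an s
          refine ⟨a, ha, isCInf_snoc_of hw.letters ha ?_⟩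
          have hre : rle (w ++ [a]) = p₀ :: (l ++ [(a, kk + 1)]) := by
            have := rle_snoc_same hxx
            simpa using this
          have : D r s (w ++ [a]) = D r s w ++ [y'] := by
            rw [D_explicit hre, FR_mid (show r < kk + 1 by omega) (by omega), hDw]
            simp [hy']
          rw [this]; exact hy'C
      · -- r < kk < s : extend with a, derivative unchanged
        refine ⟨a, ha, isCInf_snoc_of hw.letters ha ?_⟩
        have hre : rle (w ++ [a]) = p₀ :: (l ++ [(a, kk + 1)]) := by
          have := rle_snoc_same hxx
          simpa using this
        have : D r s (w ++ [a]) = D r s w := by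
          rw [D_explicit hre, D_explicit hx, FR_mid (show r < kk + 1 by omega) (by omega),
            FR_mid hgt (by omega)]
        rw [this]; exact hw.derv
      · -- kk = s : extend with the other letter, derivative unchanged
        have hk : kk = s := le_antisymm hks hges
        have hba : oth r s a ≠ a := oth_ne (by omega) ha
        have hbr : oth r s a = r ∨ oth r s a = s := oth_or
        refine ⟨oth r s a, hbr, isCInf_snoc_of hw.letters hbr ?_⟩
        have hre : rle (w ++ [oth r s a]) = p₀ :: ((l ++ [(a, kk)]) ++ [(oth r s a, 1)]) := by
          have := rle_snoc_ne hxx hba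
          simpa using this
        have : D r s (w ++ [oth r s a]) = D r s w := by
          rw [D_explicit hre, D_explicit hx, FR_low (show 1 ≤ r by omega),
            FR_mid (show r < kk by omega) (show kk ≤ s by omega)]
          simp [hk]
        rw [this]; exact hw.derv

/-! ### Canonical extension of C∞ words -/

open Classical in
noncomputable def grow (r s : ℕ) (hr : 0 < r) (hrs : r < s) (w : List ℕ) : List ℕ :=
  if h : IsCInf r s w then w ++ [(ext_letter hr hrs w.length w (le_refl _) h).choose] else w

noncomputable def extn (r s : ℕ) (hr : 0 < r) (hrs : r < s) (u : List ℕ) (t : ℕ) : List ℕ :=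
  (grow r s hr hrs)^[t] u

lemma grow_spec {r s : ℕ} (hr : 0 < r) (hrs : r < s) {w : List ℕ} (hw : IsCInf r s w) :
    ∃ y, (y = r ∨ y = s) ∧ grow r s hr hrs w = w ++ [y] ∧ IsCInf r s (w ++ [y]) := by
  have spec := (ext_letter hr hrs w.length w (le_refl _) hw).choose_spec
  exact ⟨_, spec.1, by unfold grow; rw [dif_pos hw], spec.2⟩

lemma extn_zero (r s : ℕ) (hr : 0 < r) (hrs : r < s) (u : List ℕ) :
    extn r s hr hrs u 0 = u := rfl

lemma extn_props {r s : ℕ} (hr : 0 < r) (hrs : r < s) {u : List ℕ} (hu : IsCInf r s u) :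
    ∀ t, IsCInf r s (extn r s hr hrs u t) ∧ (extn r s hr hrs u t).length = u.length + t ∧
      u <+: extn r s hr hrs u t := by
  intro t
  induction t with
  | zero => exact ⟨hu, by simp [extn_zero], List.prefix_refl u⟩
  | succ t ih =>
    obtain ⟨hC, hL, hP⟩ := ih
    obtain ⟨y, hy, hgrow, hC'⟩ := grow_spec hr hrs hC
    have he : extn r s hr hrs u (t + 1) = extn r s hr hrs u t ++ [y] := by
      show (grow r s hr hrs)^[t + 1] u = _
      rw [Function.iterate_succ_apply']
      exact hgrow
    refine ⟨by rw [he]; exact hC', by rw [he]; simp [hL]; omega,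
      by rw [he]; exact hP.trans (List.prefix_append _ _)⟩

lemma extn_step {r s : ℕ} (hr : 0 < r) (hrs : r < s) {u : List ℕ} (hu : IsCInf r s u) (t : ℕ) :
    ∃ y, (y = r ∨ y = s) ∧ extn r s hr hrs u (t + 1) = extn r s hr hrs u t ++ [y] := by
  obtain ⟨y, hy, hgrow, _⟩ := grow_spec hr hrs (extn_props hr hrs hu t).1
  refine ⟨y, hy, ?_⟩
  show (grow r s hr hrs)^[t + 1] u = _
  rw [Function.iterate_succ_apply']
  exact hgrow

lemma extn_sum_ge {r s : ℕ} (hr : 0 < r) (hrs : r < s) {u : List ℕ} (hu : IsCInf r s u) :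
    ∀ t, u.sum + t ≤ (extn r s hr hrs u t).sum := by
  intro t
  induction t with
  | zero => simp [extn_zero]
  | succ t ih =>
    obtain ⟨y, hy, he⟩ := extn_step hr hrs hu t
    rw [he]
    simp
    omega

lemma stage_exists {r s : ℕ} (hr : 0 < r) (hrs : r < s) {u : List ℕ} (hu : IsCInf r s u)
    (K : ℕ) (h0 : u.sum < K) :
    ∃ t y, (y = r ∨ y = s) ∧ extn r s hr hrs u (t + 1) = extn r s hr hrs u t ++ [y] ∧
      (extn r s hr hrs u t).sum < K ∧ K ≤ (extn r s hr hrs u t).sum + y := by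
  have hex : ∃ t, K ≤ (extn r s hr hrs u t).sum :=
    ⟨K, by have := extn_sum_ge hr hrs hu K; omega⟩
  have hT := Nat.find_spec hex
  have hT0 : Nat.find hex ≠ 0 := by
    intro h
    rw [h, extn_zero] at hT
    omega
  obtain ⟨t, ht⟩ : ∃ t, Nat.find hex = t + 1 := ⟨Nat.find hex - 1, by omega⟩
  rw [ht] at hT
  have hlt : (extn r s hr hrs u t).sum < K := by
    have := Nat.find_min hex (m := t) (by omega)
    omega
  obtain ⟨y, hy, he⟩ := extn_step hr hrs hu t
  rw [he] at hT
  simp at hT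
  exact ⟨t, y, hy, he, hlt, by omega⟩

/-! ### Letter exchange -/

lemma exch_letters {r s : ℕ} {w : List ℕ} : ∀ a ∈ exch r s w, a = r ∨ a = s := by
  intro a ha
  unfold exch at ha
  rw [List.mem_map] at ha
  obtain ⟨x, _, rfl⟩ := ha
  split_ifs <;> simp

lemma rle_exch {r s : ℕ} (hne : r ≠ s) {w : List ℕ} (hw : ∀ a ∈ w, a = r ∨ a = s) :
    rle (exch r s w) = (rle w).map (fun p => (if p.1 = r then s else r, p.2)) := by
  induction w with
  | nil => rfl
  | cons a l ih =>
    have ihl := ih (fun x hx => hw x (by simp [hx]))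
    show rle ((if a = r then s else r) :: exch r s l) = _
    rw [rle_cons, rle_cons, ihl]
    rcases hL : rle l with _ | ⟨⟨b, m⟩, t⟩
    · simp
    · have hl2 : ∀ x ∈ l, x = r ∨ x = s := fun x hx => hw x (List.mem_cons_of_mem a hx)
      have hbm : b = r ∨ b = s := rle_fst hl2 (b, m) (by rw [hL]; simp)
      have haa : a = r ∨ a = s := hw a (by simp)
      have key : ((if a = r then s else r) = if b = r then s else r) ↔ a = b := by
        rcases haa with h | h <;> rcases hbm with h' | h' <;> subst h <;> subst h' <;>
          simp [hne, Ne.symm hne]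
      simp only [List.map_cons]
      by_cases hab : a = b
      · rw [if_pos hab, if_pos (key.2 hab)]
        simp
      · rw [if_neg hab, if_neg (fun hcon => hab (key.1 hcon))]
        simp

lemma FR_map {r s : ℕ} (f : ℕ → ℕ) (a n : ℕ) :
    FR r s (f a, n) = (FR r s (a, n)).map (fun p => (f p.1, p.2)) := by
  unfold FR
  dsimp only
  split_ifs <;> simp

lemma D_exch {r s : ℕ} (hne : r ≠ s) {w : List ℕ} (hw : ∀ a ∈ w, a = r ∨ a = s) :
    D r s (exch r s w) = D r s w := by
  have hre := rle_exch hne hw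
  rcases Nat.lt_or_ge (rle w).length 2 with h2 | h2
  · rcases hx : rle w with _ | ⟨⟨b, m⟩, t⟩
    · have h1 : exch r s w = [] := by
        have : w = [] := rle_nil_iff.1 hx
        subst this; rfl
      have h2 : w = [] := rle_nil_iff.1 hx
      rw [h1, h2]
    rcases t with _ | ⟨q, t⟩
    · have hres : rle (exch r s w) = [((if b = r then s else r), m)] := by
        rw [hre, hx]; simp
      rw [D_singleton hres, D_singleton hx]
    · rw [hx] at h2; simp at h2 <;> omega
  · obtain ⟨p₀, l, p₁, hx⟩ := two_decomp h2
    have hres : rle (exch r s w) =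
        (if p₀.1 = r then s else r, p₀.2) ::
          ((l.map (fun p => (if p.1 = r then s else r, p.2))) ++
            [(if p₁.1 = r then s else r, p₁.2)]) := by
      rw [hre, hx]; simp
    rw [D_explicit hres, D_explicit hx]
    have e0 : FR r s (if p₀.1 = r then s else r, p₀.2)
        = (FR r s p₀).map (fun p => (if p.1 = r then s else r, p.2)) := by
      have := FR_map (r := r) (s := s) (fun x => if x = r then s else r) p₀.1 p₀.2
      simpa using this
    have e1 : FR r s (if p₁.1 = r then s else r, p₁.2)
        = (FR r s p₁).map (fun p => (if p.1 = r then s else r, p.2)) := by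
      have := FR_map (r := r) (s := s) (fun x => if x = r then s else r) p₁.1 p₁.2
      simpa using this
    rw [e0, e1, ← List.map_append, ← List.map_append, List.map_map]
    rfl

lemma exch_cinf {r s : ℕ} (hne : r ≠ s) {w : List ℕ} (hw : IsCInf r s w) :
    IsCInf r s (exch r s w) := by
  intro k
  cases k with
  | zero => simpa using exch_letters
  | succ k =>
    rw [Function.iterate_succ_apply, D_exch hne hw.letters]
    have := hw (k + 1)
    rwa [Function.iterate_succ_apply] at this

lemma exch_exch {r s : ℕ} (hne : r ≠ s) {w : List ℕ} (hw : ∀ a ∈ w, a = r ∨ a = s) :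
    exch r s (exch r s w) = w := by
  unfold exch
  rw [List.map_map]
  conv_rhs => rw [← List.map_id w]
  apply List.map_congr_left
  intro a ha
  rcases hw a ha with h | h <;> subst h <;> simp [hne, Ne.symm hne]

/-! ### The finite set of C∞ words -/

lemma mem_allWords {r s : ℕ} : ∀ {n : ℕ} {w : List ℕ},
    w ∈ allWords r s n ↔ (w.length = n ∧ ∀ a ∈ w, a = r ∨ a = s) := by
  intro n
  induction n with
  | zero =>
    intro w
    constructor
    · intro h; simp [allWords] at h; subst h; simp
    · intro ⟨h1, _⟩
      have : w = [] := List.length_eq_zero_iff.1 h1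
      subst this; simp [allWords]
  | succ n ih =>
    intro w
    constructor
    · intro h
      simp only [allWords, Finset.mem_union, Finset.mem_image] at h
      rcases h with ⟨v, hv, rfl⟩ | ⟨v, hv, rfl⟩ <;>
        obtain ⟨h1, h2⟩ := ih.1 hv
      · refine ⟨by simp [h1], ?_⟩
        intro a ha
        rcases List.mem_cons.1 ha with h | h
        · exact Or.inl h
        · exact h2 a h
      · refine ⟨by simp [h1], ?_⟩
        intro a ha
        rcases List.mem_cons.1 ha with h | h
        · exact Or.inr h
        · exact h2 a h
    · intro ⟨h1, h2⟩
      rcases w with _ | ⟨a, w⟩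
      · simp at h1
      simp only [allWords, Finset.mem_union, Finset.mem_image]
      have hw : w ∈ allWords r s n :=
        ih.2 ⟨by simpa using h1, fun x hx => h2 x (by simp [hx])⟩
      rcases h2 a (by simp) with h | h
      · exact Or.inl ⟨w, hw, by rw [h]⟩
      · exact Or.inr ⟨w, hw, by rw [h]⟩

open Classical in
noncomputable def Sf (r s n : ℕ) : Finset (List ℕ) :=
  (allWords r s n).filter (fun w => IsCInf r s w)

lemma mem_Sf {r s n : ℕ} {w : List ℕ} : w ∈ Sf r s n ↔ (w.length = n ∧ IsCInf r s w) := by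
  classical
  unfold Sf
  rw [Finset.mem_filter, mem_allWords]
  constructor
  · rintro ⟨⟨h1, _⟩, h3⟩; exact ⟨h1, h3⟩
  · rintro ⟨h1, h2⟩; exact ⟨⟨h1, h2.letters⟩, h2⟩

lemma Sf_nonempty {r s : ℕ} (hr : 0 < r) (hrs : r < s) (n : ℕ) : ∃ w, w ∈ Sf r s n := by
  refine ⟨extn r s hr hrs [] n, ?_⟩
  obtain ⟨hC, hL, _⟩ := extn_props hr hrs (isCInf_nil r s) n
  rw [mem_Sf]
  exact ⟨by simpa using hL, hC⟩

lemma Sf_set_eq {r s n : ℕ} :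
    {w : List ℕ | w.length = n ∧ IsCInf r s w} = ↑(Sf r s n) := by
  ext w
  simp [mem_Sf]

/-! ### The expansion construction -/

lemma rl_cons (r s c k : ℕ) (K : List ℕ) :
    rl r s c (k :: K) = (c, k) :: rl r s (oth r s c) K := rfl

lemma rl_snd (r s : ℕ) : ∀ (K : List ℕ) (c : ℕ), (rl r s c K).map Prod.snd = K := by
  intro K
  induction K with
  | nil => intro c; rfl
  | cons k K ih => intro c; rw [rl_cons]; simp [ih]

lemma rl_letters {r s : ℕ} : ∀ (K : List ℕ) (c : ℕ), (c = r ∨ c = s) →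
    ∀ p ∈ rl r s c K, (p : ℕ × ℕ).1 = r ∨ p.1 = s := by
  intro K
  induction K with
  | nil => intro c _ p hp; simp [rl] at hp
  | cons k K ih =>
    intro c hc p hp
    rw [rl_cons] at hp
    rcases List.mem_cons.1 hp with h | h
    · subst h; exact hc
    · exact ih (oth r s c) oth_or p h

lemma rl_chain {r s : ℕ} (hne : r ≠ s) : ∀ (K : List ℕ) (c : ℕ), (c = r ∨ c = s) →
    (rl r s c K).IsChain (fun p q => p.1 ≠ q.1) := by
  intro K
  induction K with
  | nil => intro c _; simp [rl]
  | cons k K ih =>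
    intro c hc
    rw [rl_cons, List.isChain_cons]
    refine ⟨?_, ih (oth r s c) oth_or⟩
    intro y hy
    rcases K with _ | ⟨k', K⟩
    · simp [rl] at hy
    · rw [rl_cons] at hy
      simp only [List.head?_cons, Option.mem_def, Option.some.injEq] at hy
      subst hy
      exact fun hcon => (oth_ne hne hc) hcon.symm

lemma rl_concat (r s : ℕ) : ∀ (K : List ℕ) (c k : ℕ), (c = r ∨ c = s) →
    ∃ x, (x = r ∨ x = s) ∧ rl r s c (K ++ [k]) = rl r s c K ++ [(x, k)] := by
  intro K
  induction K with
  | nil => intro c k hc; exact ⟨c, hc, rfl⟩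
  | cons k0 K ih =>
    intro c k hc
    obtain ⟨x, hx, he⟩ := ih (oth r s c) k oth_or
    refine ⟨x, hx, ?_⟩
    rw [List.cons_append, rl_cons, rl_cons, he]
    rfl

lemma rl_concat2 (r s : ℕ) : ∀ (K : List ℕ) (c k1 k2 : ℕ), (c = r ∨ c = s) →
    ∃ x, (x = r ∨ x = s) ∧
      rl r s c (K ++ [k1, k2]) = rl r s c K ++ [(x, k1), (oth r s x, k2)] := by
  intro K
  induction K with
  | nil => intro c k1 k2 hc; exact ⟨c, hc, rfl⟩
  | cons k0 K ih =>
    intro c k1 k2 hc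
    obtain ⟨x, hx, he⟩ := ih (oth r s c) k1 k2 oth_or
    refine ⟨x, hx, ?_⟩
    rw [List.cons_append, rl_cons, rl_cons, he]
    rfl

/-- Front run structure. -/
def bfront (r s v₀ c f : ℕ) : List (ℕ × ℕ) :=
  if v₀ = s ∧ f ≤ s then [] else [(oth r s c, f - v₀)]

/-- Length of the first main run. -/
def bl0 (s v₀ f : ℕ) : ℕ := if v₀ = s ∧ f ≤ s then f else v₀

/-- Back counts. -/
def bback (s vL b : ℕ) : List ℕ := if vL = s ∧ b ≤ s then [b] else [vL, b - vL]

/-- The run list of the constructed preimage. -/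
def bRL (r s v₀ : ℕ) (mid : List ℕ) (vL c f b : ℕ) : List (ℕ × ℕ) :=
  bfront r s v₀ c f ++ rl r s c (bl0 s v₀ f :: (mid ++ bback s vL b))

/-- The constructed preimage word. -/
def build (r s v₀ : ℕ) (mid : List ℕ) (vL c f b : ℕ) : List ℕ :=
  dec (bRL r s v₀ mid vL c f b)

lemma build_spec {r s : ℕ} (hr : 0 < r) (hrs : r < s) (v₀ : ℕ) (mid : List ℕ) (vL c f b : ℕ)
    (hv : IsCInf r s (v₀ :: (mid ++ [vL])))
    (hc : c = r ∨ c = s)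
    (hf1 : r + 1 ≤ f) (hf2 : f ≤ v₀ + r) (hb1 : r + 1 ≤ b) (hb2 : b ≤ vL + r) :
    IsCInf r s (build r s v₀ mid vL c f b) ∧
    (build r s v₀ mid vL c f b).length + v₀ + vL = f + b + (v₀ :: (mid ++ [vL])).sum ∧
    D r s (build r s v₀ mid vL c f b) = v₀ :: (mid ++ [vL]) ∧
    (((rle (build r s v₀ mid vL c f b)).head? = some (oth r s c, f - v₀) ∧ f - v₀ ≤ r ∧ v₀ < f)
      ∨ ((rle (build r s v₀ mid vL c f b)).head? = some (c, f) ∧ r < f)) := by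
  have hne : r ≠ s := by omega
  have hlet := hv.letters
  have hv₀ : v₀ = r ∨ v₀ = s := hlet v₀ (by simp)
  have hvL : vL = r ∨ vL = s := hlet vL (by simp)
  have hmidL : ∀ x ∈ mid, x = r ∨ x = s := fun x hx => hlet x (by simp [hx])
  have hone : ∀ x ∈ mid, 1 ≤ x := fun x hx => by rcases hmidL x hx with h | h <;> omega
  -- counts of the main run list are positive
  have hcnt : ∀ k ∈ (bl0 s v₀ f :: (mid ++ bback s vL b)), 1 ≤ k := by
    intro k hk
    rcases List.mem_cons.1 hk with h | h
    · subst h; unfold bl0; split_ifs <;> omega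
    rcases List.mem_append.1 h with h | h
    · exact hone k h
    · unfold bback at h
      split_ifs at h with hB <;> simp at h
      · omega
      · rcases h with h | h <;> omega
  have hrlcnt : ∀ p ∈ rl r s c (bl0 s v₀ f :: (mid ++ bback s vL b)), 1 ≤ (p : ℕ × ℕ).2 := by
    intro p hp
    apply hcnt
    have : p.2 ∈ (rl r s c (bl0 s v₀ f :: (mid ++ bback s vL b))).map Prod.snd :=
      List.mem_map_of_mem hp
    rwa [rl_snd] at this
  have hvalid : Valid (bRL r s v₀ mid vL c f b) := by
    unfold bRL bfront
    split_ifs with hA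
    · rw [List.nil_append]
      exact ⟨hrlcnt, rl_chain hne _ c hc⟩
    · rw [List.singleton_append]
      constructor
      · intro p hp
        rcases List.mem_cons.1 hp with h | h
        · subst h
          push_neg at hA
          dsimp only
          rcases hv₀ with h | h <;> omega
        · exact hrlcnt p h
      · rw [rl_cons, List.isChain_cons_cons]
        exact ⟨fun hcon => (oth_ne hne hc) hcon,
          by rw [← rl_cons]; exact rl_chain hne _ c hc⟩
  have hrle : rle (build r s v₀ mid vL c f b) = bRL r s v₀ mid vL c f b := by
    unfold build
    exact rle_dec hvalid
  -- letters of the constructed word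
  have hletters : ∀ a ∈ build r s v₀ mid vL c f b, a = r ∨ a = s := by
    intro a ha
    unfold build at ha
    obtain ⟨p, hp, rfl⟩ := mem_dec ha
    unfold bRL bfront at hp
    rcases List.mem_append.1 hp with h | h
    · split_ifs at h
      · simp at h
      · simp at h; rw [h]; exact oth_or
    · exact rl_letters _ c hc p h
  -- the length computation
  have hlen : (build r s v₀ mid vL c f b).length + v₀ + vL
      = f + b + (v₀ :: (mid ++ [vL])).sum := by
    unfold build
    rw [dec_length]
    unfold bRL
    rw [List.map_append, List.sum_append, rl_snd]
    have hback : (bback s vL b).sum = b := by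
      unfold bback
      split_ifs with hB
      · simp
      · push_neg at hB
        simp
        rcases hvL with h | h <;> omega
    have hbl0 : bl0 s v₀ f + ((bfront r s v₀ c f).map Prod.snd).sum = f := by
      unfold bl0 bfront
      split_ifs with hA
      · simp
      · push_neg at hA
        simp
        rcases hv₀ with h | h <;> omega
    simp only [List.sum_cons, List.sum_append]
    rw [hback]
    simp only [List.sum_cons, List.sum_append, List.sum_nil]
    omega
  -- the derivative computation
  have hD : D r s (build r s v₀ mid vL c f b) = v₀ :: (mid ++ [vL]) := by
    by_cases hB : vL = s ∧ b ≤ s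
    · -- back is a single extended run
      obtain ⟨x, hx, hcat⟩ := rl_concat r s mid (oth r s c) b oth_or
      have hKK : rl r s c (bl0 s v₀ f :: (mid ++ bback s vL b))
          = (c, bl0 s v₀ f) :: (rl r s (oth r s c) mid ++ [(x, b)]) := by
        rw [show bback s vL b = [b] from by unfold bback; rw [if_pos hB]]
        rw [rl_cons, hcat]
      by_cases hA : v₀ = s ∧ f ≤ s
      · have hRL : rle (build r s v₀ mid vL c f b)
            = (c, f) :: ((rl r s (oth r s c) mid) ++ [(x, b)]) := by
          rw [hrle]
          unfold bRL bfront
          rw [if_pos hA, List.nil_append, hKK,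
            show bl0 s v₀ f = f from by unfold bl0; rw [if_pos hA]]
        rw [D_explicit hRL, FR_mid (show r < f by omega) (by omega),
          FR_mid (show r < b by omega) (by omega)]
        simp [rl_snd, hA.1, hB.1]
      · have hRL : rle (build r s v₀ mid vL c f b)
            = (oth r s c, f - v₀) :: (((c, v₀) :: rl r s (oth r s c) mid) ++ [(x, b)]) := by
          rw [hrle]
          unfold bRL bfront
          rw [if_neg hA, hKK, show bl0 s v₀ f = v₀ from by unfold bl0; rw [if_neg hA]]
          simp
        have hplow : f - v₀ ≤ r := by
          push_neg at hA
          rcases hv₀ with h | h <;> omega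
        rw [D_explicit hRL, FR_low hplow, FR_mid (show r < b by omega) (by omega)]
        simp [rl_snd, hB.1]
    · -- back is a short run plus discarded run
      push_neg at hB
      have hbvL : vL < b := by rcases hvL with h | h <;> omega
      obtain ⟨x, hx, hcat⟩ := rl_concat2 r s mid (oth r s c) vL (b - vL) oth_or
      have hKK : rl r s c (bl0 s v₀ f :: (mid ++ bback s vL b))
          = (c, bl0 s v₀ f) ::
              ((rl r s (oth r s c) mid ++ [(x, vL)]) ++ [(oth r s x, b - vL)]) := by
        rw [show bback s vL b = [vL, b - vL] from by
          unfold bback; rw [if_neg (by push_neg; intro h; rcases hvL with h' | h' <;> omega)]]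
        rw [rl_cons, hcat]
        simp
      by_cases hA : v₀ = s ∧ f ≤ s
      · have hRL : rle (build r s v₀ mid vL c f b)
            = (c, f) :: (((rl r s (oth r s c) mid) ++ [(x, vL)]) ++ [(oth r s x, b - vL)]) := by
          rw [hrle]
          unfold bRL bfront
          rw [if_pos hA, List.nil_append, hKK,
            show bl0 s v₀ f = f from by unfold bl0; rw [if_pos hA]]
        rw [D_explicit hRL, FR_mid (show r < f by omega) (by omega),
          FR_low (show b - vL ≤ r by omega)]
        simp [rl_snd, hA.1]
      · have hRL : rle (build r s v₀ mid vL c f b)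
            = (oth r s c, f - v₀) ::
              ((((c, v₀) :: rl r s (oth r s c) mid) ++ [(x, vL)]) ++ [(oth r s x, b - vL)]) := by
          rw [hrle]
          unfold bRL bfront
          rw [if_neg hA, hKK, show bl0 s v₀ f = v₀ from by unfold bl0; rw [if_neg hA]]
          simp
        have hplow : f - v₀ ≤ r := by
          push_neg at hA
          rcases hv₀ with h | h <;> omega
        rw [D_explicit hRL, FR_low hplow, FR_low (show b - vL ≤ r by omega)]
        simp [rl_snd]
  refine ⟨isCInf_iff.2 ⟨hletters, by rw [hD]; exact hv⟩, hlen, hD, ?_⟩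
  -- head structure
  rw [hrle]
  unfold bRL bfront
  by_cases hA : v₀ = s ∧ f ≤ s
  · right
    rw [if_pos hA, List.nil_append, rl_cons,
      show bl0 s v₀ f = f from by unfold bl0; rw [if_pos hA]]
    exact ⟨rfl, by omega⟩
  · left
    rw [if_neg hA, List.singleton_append]
    push_neg at hA
    refine ⟨rfl, ?_, ?_⟩ <;> rcases hv₀ with h | h <;> omega

/-! ### The main counting step -/

/-- Recover the front parameters from a constructed word. -/
def recCF (r s : ℕ) (w : List ℕ) (v₀ : ℕ) : ℕ × ℕ :=
  ((rle w).head?.map (fun p => if p.2 ≤ r then (oth r s p.1, p.2 + v₀) else p)).getD (0, 0)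

/-- The bound constant. -/
def KC (r s : ℕ) : ℕ := 3 * (r + s) * s * s + (r + s) * (2 * r + 1)

lemma main_exists {r s : ℕ} (hr : 0 < r) (hrs : r < s) {m n : ℕ} (hm : 1 ≤ m)
    (hn : (r ^ 2 + s ^ 2) * m + KC r s ≤ (r + s) * n)
    {u : List ℕ} (hu : u ∈ Sf r s m) {c f : ℕ} (hc : c = r ∨ c = s)
    (hf1 : r + 1 ≤ f) (hf2 : f ≤ u.head! + r) :
    ∃ w, w ∈ Sf r s n ∧ (D r s w).take m = u ∧ recCF r s w u.head! = (c, f) := by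
  have hne : r ≠ s := by omega
  obtain ⟨hulen, huC⟩ := mem_Sf.1 hu
  rcases u with _ | ⟨u₀, u'⟩
  · simp at hulen; omega
  have hhead : (u₀ :: u').head! = u₀ := rfl
  rw [hhead] at hf2
  have hu₀ : u₀ = r ∨ u₀ = s := huC.letters u₀ (by simp)
  have hwt := weight_bound hr hrs huC
  rw [hulen] at hwt
  have hgap : (u₀ :: u').sum + 2 * r + 1 ≤ n := by
    have h1 : (r + s) * ((u₀ :: u').sum + 2 * r + 1) ≤ (r + s) * n := by
      calc (r + s) * ((u₀ :: u').sum + 2 * r + 1)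
          = (r + s) * (u₀ :: u').sum + (r + s) * (2 * r + 1) := by ring
        _ ≤ (r ^ 2 + s ^ 2) * m + 3 * (r + s) * s * s + (r + s) * (2 * r + 1) := by omega
        _ = (r ^ 2 + s ^ 2) * m + KC r s := by unfold KC; ring
        _ ≤ (r + s) * n := hn
    exact Nat.le_of_mul_le_mul_left h1 (by omega)
  have hu₀sum : u₀ ≤ (u₀ :: u').sum := by simp
  set K := n + u₀ - (f + r) with hK
  have hKgt : (u₀ :: u').sum < K := by omega
  obtain ⟨t, y, hy, he, hlt, hub⟩ := stage_exists hr hrs huC K hKgt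
  obtain ⟨hC', hL', hP'⟩ := extn_props hr hrs huC t
  obtain ⟨ρ, hρ⟩ := hP'
  obtain ⟨hC'', hL'', _⟩ := extn_props hr hrs huC (t + 1)
  set MID := u' ++ ρ with hMID
  have hveq : extn r s hr hrs (u₀ :: u') (t + 1) = u₀ :: (MID ++ [y]) := by
    rw [he, ← hρ]
    simp [hMID]
  have hvC : IsCInf r s (u₀ :: (MID ++ [y])) := by rw [← hveq]; exact hC''
  have hsum' : (u₀ :: (MID ++ [y])).sum = (extn r s hr hrs (u₀ :: u') t).sum + y := by
    rw [← hveq, he]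
    simp
  set SGt := (extn r s hr hrs (u₀ :: u') t).sum with hSG
  set b := n + u₀ - (SGt + f) with hbdef
  have hy1 : 1 ≤ y := by rcases hy with h | h <;> omega
  have hb1 : r + 1 ≤ b := by omega
  have hb2 : b ≤ y + r := by omega
  obtain ⟨hwC, hwlen, hwD, hwhead⟩ :=
    build_spec hr hrs u₀ MID y c f b hvC hc hf1 hf2 hb1 hb2
  refine ⟨build r s u₀ MID y c f b, ?_, ?_, ?_⟩
  · rw [mem_Sf]
    refine ⟨?_, hwC⟩
    rw [hsum'] at hwlen
    omega
  · rw [hwD]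
    have hsplit : u₀ :: (MID ++ [y]) = (u₀ :: u') ++ (ρ ++ [y]) := by simp [hMID]
    rw [hsplit, ← hulen]
    exact List.take_left
  · rcases hwhead with ⟨h1, h2, h3⟩ | ⟨h1, h2⟩
    · unfold recCF
      rw [h1]
      simp only [Option.map_some, Option.getD_some]
      rw [if_pos h2, hhead, oth_oth hne hc, show f - u₀ + u₀ = f by omega]
    · unfold recCF
      rw [h1]
      simp only [Option.map_some, Option.getD_some]
      rw [if_neg (by omega)]


def encU (r s : ℕ) (p : List ℕ × ℕ) : List ℕ :=
  if p.2 < 2 * p.1.head! then p.1 else exch r s p.1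

def encO (r s : ℕ) (p : List ℕ × ℕ) : ℕ :=
  if p.2 < 2 * p.1.head! then p.2 else p.2 + (s - r)

def encC (r s : ℕ) (p : List ℕ × ℕ) : ℕ := if encO r s p % 2 = 1 then s else r

def encF (r s : ℕ) (p : List ℕ × ℕ) : ℕ := r + 1 + encO r s p / 2

lemma exch_head {r s a : ℕ} {l : List ℕ} :
    (exch r s (a :: l)).head! = (if a = r then s else r) := rfl

lemma enc_facts {r s : ℕ} (hr : 0 < r) (hrs : r < s) {m : ℕ} (hm : 1 ≤ m)
    {p : List ℕ × ℕ} (hup : p.1 ∈ Sf r s m) (hjp : p.2 < r + s) :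
    encU r s p ∈ Sf r s m ∧
    encO r s p < 2 * (encU r s p).head! ∧
    (p.2 < 2 * p.1.head! → (encO r s p = p.2 ∧ encU r s p = p.1 ∧ encO r s p < r + s)) ∧
    (¬ p.2 < 2 * p.1.head! →
      (encO r s p = p.2 + (s - r) ∧ encU r s p = exch r s p.1 ∧
        r + s ≤ encO r s p)) := by
  obtain ⟨u, j⟩ := p
  have hu : u ∈ Sf r s m := hup
  have hj : j < r + s := hjp
  have hne : r ≠ s := by omega
  obtain ⟨hulen, huC⟩ := mem_Sf.1 hu
  rcases u with _ | ⟨u₀, u'⟩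
  · simp at hulen; omega
  have hu₀ : u₀ = r ∨ u₀ = s := huC.letters u₀ (by simp)
  have hhead : (u₀ :: u').head! = u₀ := rfl
  by_cases hb : j < 2 * (u₀ :: u').head!
  · rw [hhead] at hb
    have e1 : encU r s (u₀ :: u', j) = u₀ :: u' := by unfold encU; rw [if_pos (by simpa [hhead])]
    have e2 : encO r s (u₀ :: u', j) = j := by unfold encO; rw [if_pos (by simpa [hhead])]
    refine ⟨by rw [e1]; exact hu, ?_, fun _ => ⟨e2, e1, by omega⟩, fun hcon => absurd (by simpa [hhead]) hcon⟩
    rw [e1, e2, hhead]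
    omega
  · rw [hhead] at hb
    have hu₀r : u₀ = r := by rcases hu₀ with h | h <;> omega
    have e1 : encU r s (u₀ :: u', j) = exch r s (u₀ :: u') := by
      unfold encU; rw [if_neg (by simpa [hhead] using hb)]
    have e2 : encO r s (u₀ :: u', j) = j + (s - r) := by
      unfold encO; rw [if_neg (by simpa [hhead] using hb)]
    have hmem : exch r s (u₀ :: u') ∈ Sf r s m := by
      rw [mem_Sf]
      exact ⟨by simpa [exch] using hulen, exch_cinf hne huC⟩
    have hexh : (exch r s (u₀ :: u')).head! = s := by
      rw [exch_head, if_pos hu₀r]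
    refine ⟨by rw [e1]; exact hmem, ?_, fun hcon => absurd hcon (by simpa [hhead] using hb),
      fun _ => ⟨e2, e1, by omega⟩⟩
    rw [e1, e2, hexh]
    omega

lemma step_lemma {r s : ℕ} (hr : 0 < r) (hrs : r < s) {m n : ℕ} (hm : 1 ≤ m)
    (hn : (r ^ 2 + s ^ 2) * m + KC r s ≤ (r + s) * n) :
    (r + s) * (Sf r s m).card ≤ (Sf r s n).card := by
  classical
  have hne : r ≠ s := by omega
  -- premise package
  have hprem : ∀ p : List ℕ × ℕ, p ∈ Sf r s m ×ˢ Finset.range (r + s) →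
      ∃ w, w ∈ Sf r s n ∧ (D r s w).take m = encU r s p ∧
        recCF r s w (encU r s p).head! = (encC r s p, encF r s p) := by
    intro p hp
    rw [Finset.mem_product] at hp
    obtain ⟨hu, hj⟩ := hp
    rw [Finset.mem_range] at hj
    obtain ⟨hU, hO, _, _⟩ := enc_facts hr hrs hm hu hj
    refine main_exists hr hrs hm hn hU ?_ ?_ ?_
    · unfold encC; split_ifs <;> simp
    · unfold encF; omega
    · unfold encF; omega
  set F : List ℕ × ℕ → List ℕ := fun p => if h : ∃ w, w ∈ Sf r s n ∧
      (D r s w).take m = encU r s p ∧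
      recCF r s w (encU r s p).head! = (encC r s p, encF r s p) then h.choose else []
    with hF
  have hmaps : ∀ p ∈ Sf r s m ×ˢ Finset.range (r + s), F p ∈ Sf r s n := by
    intro p hp
    have h := hprem p hp
    rw [hF]
    simp only [dif_pos h]
    exact h.choose_spec.1
  have hinj : Set.InjOn F ↑(Sf r s m ×ˢ Finset.range (r + s)) := by
    rintro ⟨u, j⟩ hp ⟨u', j'⟩ hp' heq
    obtain ⟨hu, hj⟩ := Finset.mem_product.1 (Finset.mem_coe.1 hp)
    obtain ⟨hu', hj'⟩ := Finset.mem_product.1 (Finset.mem_coe.1 hp')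
    rw [Finset.mem_range] at hj hj'
    have h := hprem (u, j) (by rw [Finset.mem_product]; exact ⟨hu, Finset.mem_range.2 hj⟩)
    have h' := hprem (u', j') (by rw [Finset.mem_product]; exact ⟨hu', Finset.mem_range.2 hj'⟩)
    have hFp : F (u, j) = h.choose := by rw [hF]; simp only [dif_pos h]
    have hFp' : F (u', j') = h'.choose := by rw [hF]; simp only [dif_pos h']
    have hw := h.choose_spec
    have hw' := h'.choose_spec
    rw [← hFp] at hw
    rw [← hFp', ← heq] at hw'
    -- same word, so same take and recCF
    have hUeq : encU r s (u, j) = encU r s (u', j') := by rw [← hw.2.1, ← hw'.2.1]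
    have hCF : (encC r s (u, j), encF r s (u, j)) = (encC r s (u', j'), encF r s (u', j')) := by
      rw [← hw.2.2, ← hw'.2.2, hUeq]
    have hCeq : encC r s (u, j) = encC r s (u', j') := congrArg Prod.fst hCF
    have hFeq : encF r s (u, j) = encF r s (u', j') := congrArg Prod.snd hCF
    -- recover the option index
    have hOeq : encO r s (u, j) = encO r s (u', j') := by
      have ho2 : encO r s (u, j) / 2 = encO r s (u', j') / 2 := by
        unfold encF at hFeq; omega
      have ho1 : encO r s (u, j) % 2 = encO r s (u', j') % 2 := by
        unfold encC at hCeq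
        split_ifs at hCeq with h1 h2 h2
        · omega
        · omega
        · omega
        · omega
      omega
    obtain ⟨_, _, hdir, hbor⟩ := enc_facts hr hrs hm hu hj
    obtain ⟨_, _, hdir', hbor'⟩ := enc_facts hr hrs hm hu' hj'
    by_cases hd : j < 2 * u.head!
    · obtain ⟨e2, e1, elt⟩ := hdir hd
      by_cases hd' : j' < 2 * u'.head!
      · obtain ⟨e2', e1', _⟩ := hdir' hd'
        have h4 : u = u' := by
          have h5 := hUeq; rw [e1, e1'] at h5; exact h5
        subst h4
        have h4 : j = j' := by
          have h5 := hOeq; rw [e2, e2'] at h5; exact h5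
        subst h4
        rfl
      · obtain ⟨e2', e1', egt⟩ := hbor' hd'
        rw [hOeq, e2'] at elt
        omega
    · obtain ⟨e2, e1, egt⟩ := hbor hd
      by_cases hd' : j' < 2 * u'.head!
      · obtain ⟨e2', e1', elt'⟩ := hdir' hd'
        rw [← hOeq, e2] at elt'
        omega
      · obtain ⟨e2', e1', _⟩ := hbor' hd'
        have hletters : ∀ a ∈ u, a = r ∨ a = s := (mem_Sf.1 hu).2.letters
        have hletters' : ∀ a ∈ u', a = r ∨ a = s := (mem_Sf.1 hu').2.letters
        have hee : exch r s u = exch r s u' := by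
          have h5 := hUeq; rw [e1, e1'] at h5; exact h5
        have h4 : u = u' := by
          rw [← exch_exch hne hletters, ← exch_exch hne hletters', hee]
        subst h4
        have h6 : j + (s - r) = j' + (s - r) := by
          have h5 := hOeq; rw [e2, e2'] at h5; exact h5
        have h4 : j = j' := by omega
        subst h4
        rfl
  have hcard := Finset.card_le_card_of_injOn F hmaps hinj
  rw [Finset.card_product, Finset.card_range] at hcard
  rw [mul_comm]
  exact hcard

end Dev

/-- Lower bound on the complexity of C∞-words over {r,s}. -/
theorem complexity_lower_bound (r s : ℕ) (hr : 0 < r) (hrs : r < s) :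
    ∃ (N : ℕ) (C : ℝ), 0 < C ∧ ∀ n : ℕ, N ≤ n →
      C * (n : ℝ) ^ (Real.log ((r : ℝ) + s) / Real.log (((r : ℝ) ^ 2 + s ^ 2) / (r + s))) ≤
        (({w : List ℕ | w.length = n ∧ IsCInf r s w}.ncard : ℝ)) := by
  have hs2 : 2 ≤ s := by omega
  set γ : ℕ → ℕ := fun n => (Sf r s n).card with hγ
  have hset : ∀ n : ℕ, ({w : List ℕ | w.length = n ∧ IsCInf r s w}.ncard : ℝ) = (γ n : ℝ) := by
    intro n
    rw [Sf_set_eq, Set.ncard_coe_finset]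
  have hpos : ∀ n, 1 ≤ γ n := by
    intro n
    obtain ⟨w, hw⟩ := Sf_nonempty hr hrs n
    exact Finset.card_pos.2 ⟨w, hw⟩
  have hrs0 : (0 : ℝ) < (r : ℝ) + s := by positivity
  have hr1 : (1 : ℝ) ≤ (r : ℝ) := by exact_mod_cast hr
  have hsR : (2 : ℝ) ≤ (s : ℝ) := by exact_mod_cast hs2
  set Q : ℝ := ((r : ℝ) ^ 2 + s ^ 2) / (r + s) with hQdef
  have hQ1 : 1 < Q := by
    rw [hQdef, lt_div_iff₀ hrs0]
    nlinarith
  have hQ0 : (0 : ℝ) < Q := by linarith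
  have hP1 : (1 : ℝ) < (r : ℝ) + s := by linarith
  set β : ℝ := Real.log ((r : ℝ) + s) / Real.log Q with hβdef
  have hβpos : 0 < β := div_pos (Real.log_pos hP1) (Real.log_pos hQ1)
  have hQβ : Q ^ β = (r : ℝ) + s := by
    rw [Real.rpow_def_of_pos hQ0, hβdef, mul_comm,
      div_mul_cancel₀ _ (ne_of_gt (Real.log_pos hQ1)), Real.exp_log (by linarith)]
  set A : ℝ := (KC r s : ℝ) / ((r : ℝ) + s) with hAdef
  have hA0 : 0 ≤ A := by positivity
  -- the step inequality in real form
  have hstep : ∀ mm nn : ℕ, 1 ≤ mm → Q * mm + A ≤ (nn : ℝ) →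
      ((r : ℝ) + s) * (γ mm : ℝ) ≤ (γ nn : ℝ) := by
    intro mm nn h1 h2
    have hq : ((r : ℝ) + s) * Q = (r : ℝ) ^ 2 + s ^ 2 := by
      rw [hQdef]; field_simp
    have ha : ((r : ℝ) + s) * A = (KC r s : ℝ) := by
      rw [hAdef]; field_simp
    have hmul : ((r : ℝ) + s) * (Q * mm + A) = ((r : ℝ) ^ 2 + s ^ 2) * mm + KC r s := by
      calc ((r : ℝ) + s) * (Q * mm + A) = (((r : ℝ) + s) * Q) * mm + ((r : ℝ) + s) * A := by ring
        _ = ((r : ℝ) ^ 2 + s ^ 2) * mm + KC r s := by rw [hq, ha]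
    have h3 : ((r : ℝ) ^ 2 + s ^ 2) * mm + (KC r s : ℝ) ≤ ((r : ℝ) + s) * nn := by
      rw [← hmul]
      exact mul_le_mul_of_nonneg_left h2 hrs0.le
    have hineq : (r ^ 2 + s ^ 2) * mm + KC r s ≤ (r + s) * nn := by
      exact_mod_cast h3
    have h4 := step_lemma hr hrs h1 hineq
    calc ((r : ℝ) + s) * (γ mm : ℝ) = (((r + s) * γ mm : ℕ) : ℝ) := by push_cast; ring
      _ ≤ (γ nn : ℝ) := by exact_mod_cast h4
  set Fc : ℝ := (A + Q) / (Q - 1) with hFcdef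
  have hFc0 : 0 ≤ Fc := div_nonneg (by linarith) (by linarith)
  have hQne : Q - 1 ≠ 0 := by intro h; rw [sub_eq_zero] at h; exact absurd h.symm (ne_of_lt hQ1)
  have hFckey : (Q - 1) * Fc = A + Q := by
    rw [hFcdef, mul_comm, div_mul_cancel₀ _ hQne]
  set N₁ : ℕ := ⌈Q + A⌉₊ + 1 with hN₁
  have hN₁R : Q + A + 1 ≤ (N₁ : ℝ) := by
    have := Nat.le_ceil (Q + A)
    push_cast [hN₁]
    linarith
  have hN₁1 : 1 ≤ N₁ := by omega
  have hbase_pos : (0 : ℝ) < (N₁ : ℝ) + Fc := by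
    have : (1 : ℝ) ≤ (N₁ : ℝ) := by exact_mod_cast hN₁1
    linarith
  set C : ℝ := (((N₁ : ℝ) + Fc) ^ β)⁻¹ with hCdef
  have hCpos : 0 < C := by
    rw [hCdef]
    exact inv_pos.2 (Real.rpow_pos_of_pos hbase_pos β)
  have claim : ∀ n : ℕ, 1 ≤ n → C * ((n : ℝ) + Fc) ^ β ≤ (γ n : ℝ) := by
    intro n
    induction n using Nat.strong_induction_on with
    | _ n ih =>
      intro h1n
      by_cases hsmall : n ≤ N₁
      · have h5 : ((n : ℝ) + Fc) ^ β ≤ ((N₁ : ℝ) + Fc) ^ β := by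
          apply Real.rpow_le_rpow (by positivity) _ hβpos.le
          have : (n : ℝ) ≤ (N₁ : ℝ) := by exact_mod_cast hsmall
          linarith
        have h6 : C * ((n : ℝ) + Fc) ^ β ≤ 1 := by
          calc C * ((n : ℝ) + Fc) ^ β ≤ C * ((N₁ : ℝ) + Fc) ^ β :=
                mul_le_mul_of_nonneg_left h5 hCpos.le
            _ = 1 := by
                rw [hCdef]
                exact inv_mul_cancel₀ (ne_of_gt (Real.rpow_pos_of_pos hbase_pos β))
        have h7 : (1 : ℝ) ≤ (γ n : ℝ) := by exact_mod_cast hpos n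
        linarith
      · push_neg at hsmall
        have hnR : (N₁ : ℝ) < (n : ℝ) := by exact_mod_cast hsmall
        set mR : ℝ := ((n : ℝ) - A) / Q with hmR
        have hmR1 : 1 ≤ mR := by
          rw [hmR, le_div_iff₀ hQ0]
          linarith
        have hmR0 : 0 ≤ mR := by linarith
        set m : ℕ := ⌊mR⌋₊ with hm
        have hm1 : 1 ≤ m := Nat.le_floor (by exact_mod_cast hmR1)
        have hfl : (m : ℝ) ≤ mR := Nat.floor_le hmR0
        have hfl2 : mR - 1 < (m : ℝ) := by
          have := Nat.sub_one_lt_floor mR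
          exact_mod_cast this
        have hmn : m < n := by
          have h8 : (m : ℝ) < (n : ℝ) := by
            have h9 : mR < (n : ℝ) := by
              rw [hmR, div_lt_iff₀ hQ0]
              nlinarith
            linarith
          exact_mod_cast h8
        have hQm : Q * m + A ≤ (n : ℝ) := by
          have h9 : Q * (m : ℝ) ≤ Q * mR := mul_le_mul_of_nonneg_left hfl hQ0.le
          rw [hmR, mul_div_cancel₀ _ (ne_of_gt hQ0)] at h9
          linarith
        have hQmF : (n : ℝ) + Fc ≤ Q * ((m : ℝ) + Fc) := by
          have h9 : Q * (mR - 1) < Q * (m : ℝ) := mul_lt_mul_of_pos_left hfl2 hQ0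
          rw [mul_sub, hmR, mul_div_cancel₀ _ (ne_of_gt hQ0)] at h9
          linarith [hFckey, h9]
        have hih := ih m hmn hm1
        have hγstep := hstep m n hm1 hQm
        calc C * ((n : ℝ) + Fc) ^ β
            ≤ C * (Q * ((m : ℝ) + Fc)) ^ β := by
              apply mul_le_mul_of_nonneg_left _ hCpos.le
              exact Real.rpow_le_rpow (by positivity) hQmF hβpos.le
          _ = C * (Q ^ β * ((m : ℝ) + Fc) ^ β) := by
              rw [Real.mul_rpow hQ0.le (by positivity)]
          _ = ((r : ℝ) + s) * (C * ((m : ℝ) + Fc) ^ β) := by rw [hQβ]; ring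
          _ ≤ ((r : ℝ) + s) * (γ m : ℝ) := mul_le_mul_of_nonneg_left hih hrs0.le
          _ ≤ (γ n : ℝ) := hγstep
  refine ⟨1, C, hCpos, ?_⟩
  intro n hn
  rw [hset n]
  calc C * (n : ℝ) ^ β ≤ C * ((n : ℝ) + Fc) ^ β := by
        apply mul_le_mul_of_nonneg_left _ hCpos.le
        exact Real.rpow_le_rpow (by positivity) (by linarith) hβpos.le
    _ ≤ (γ n : ℝ) := claim n hn

end Kola
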